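/- arXiv:1903.11360 — 15 statements merged into one kernel-verified Lean document; each statement's English description precedes it below -/
import Mathlib

section
/- Suppose endowed valuations are given by v^X(Y) = v(Y) + g^X(X ∩ Y) for gain functions g^X : 2^X → ℝ. Then the loss aversion inequality v^{X∪Y}(X∪Y) - v^{X∪Y}(Y) ≥ v^Y(X∪Y) - v^Y(Y) holds for all X, Y ⊆ M if and only if every gain function is weakly monotone at the top, i.e., g^X(Z) ≤ g^X(X) for all Z ⊆ X ⊆ M. -/
/-- Loss aversion holds iff every gain function is weakly monotone at the top. -/
theorem stmt1 {α : Type*} [DecidableEq α] (M : Finset α)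
    (v : Finset α → ℝ) (g : Finset α → Finset α → ℝ) :
    (∀ X ⊆ M, ∀ Y ⊆ M,
        (v (X ∪ Y) + g (X ∪ Y) ((X ∪ Y) ∩ (X ∪ Y)))
          - (v Y + g (X ∪ Y) ((X ∪ Y) ∩ Y))
        ≥ (v (X ∪ Y) + g Y (Y ∩ (X ∪ Y))) - (v Y + g Y (Y ∩ Y))) ↔
    (∀ X ⊆ M, ∀ Z ⊆ X, g X Z ≤ g X X) := by
  constructor
  · intro h X hX Z hZ
    have := h X hX Z (hZ.trans hX)
    rw [Finset.union_eq_left.mpr hZ] at this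
    rw [Finset.inter_self, Finset.inter_eq_right.mpr hZ,
      Finset.inter_eq_left.mpr hZ, Finset.inter_self] at this
    linarith
  · intro h X hX Y hY
    rw [Finset.inter_self, Finset.inter_eq_left.mpr Finset.subset_union_right,
      Finset.inter_self]
    have := h (X ∪ Y) (Finset.union_subset hX hY) ((X ∪ Y) ∩ Y)
      Finset.inter_subset_left
    linarith [this]
end

section
/- Let v : 2^M → ℝ be monotone, let g^X : 2^X → ℝ be a gain function, let p ∈ ℝ^M be item prices (with p(S) = Σ_{j∈S} p_j), and suppose X ⊆ M satisfies g^X(Z) - p(Z) ≤ g^X(X) - p(X) for all Z ⊆ X. Then for every Y ⊆ M, v^X(Y) - p(Y) ≤ v^X(X ∪ Y) - p(X ∪ Y), where v^X(Y) = v(Y) + g^X(X ∩ Y). In particular, any utility-maximizing deviation can be assumed to contain X. -/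
/-- Inward stability: if the gain function minus prices is maximized at `X`,
then moving from any `Y` to `X ∪ Y` weakly improves endowed utility. -/
theorem stmt2 {α : Type*} [DecidableEq α] (M X : Finset α) (hX : X ⊆ M)
    (v : Finset α → ℝ)
    (hmono : ∀ A B : Finset α, A ⊆ B → B ⊆ M → v A ≤ v B)
    (g : Finset α → ℝ) (p : α → ℝ)
    (hg : ∀ Z ⊆ X, g Z - ∑ j ∈ Z, p j ≤ g X - ∑ j ∈ X, p j) :
    ∀ Y ⊆ M,
      (v Y + g (X ∩ Y)) - ∑ j ∈ Y, p j ≤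
        (v (X ∪ Y) + g (X ∩ (X ∪ Y))) - ∑ j ∈ X ∪ Y, p j := by
  intro Y hY
  have h1 : v Y ≤ v (X ∪ Y) :=
    hmono Y (X ∪ Y) Finset.subset_union_right (Finset.union_subset hX hY)
  have h2 : X ∩ (X ∪ Y) = X := Finset.inter_eq_left.mpr Finset.subset_union_left
  have h3 := hg (X ∩ Y) Finset.inter_subset_left
  have h4 : (∑ j ∈ X ∪ Y, p j) + ∑ j ∈ X ∩ Y, p j = (∑ j ∈ X, p j) + ∑ j ∈ Y, p j :=
    Finset.sum_union_inter
  rw [h2]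
  linarith
end

section
/- Stability preservation: let (S, p) be an E-endowment equilibrium with respect to valuations (v_1,…,v_n) and endowment environment E = (E_1,…,E_n), and let Ê be an endowment environment such that for each consumer i and each Z ⊆ S_i, g_i^{S_i}(Z | S_i \ Z) ≤ ĝ_i^{S_i}(Z | S_i \ Z). Then (S, p) is also an Ê-endowment equilibrium. -/
/-- Stability preservation: an endowment equilibrium for gains `g` remains an
endowment equilibrium for any gains `ghat` dominating `g` in the loss-aversion
partial order (on the equilibrium bundles). -/
theorem stmt6 {α ι : Type*} [DecidableEq α] [DecidableEq ι] [Fintype ι]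
    (M : Finset α) (v : ι → Finset α → ℝ)
    (S : ι → Finset α) (p : α → ℝ)
    (g ghat : ι → Finset α → Finset α → ℝ)
    (hS : ∀ i, S i ⊆ M)
    (hclear : Finset.univ.biUnion S = M)
    (hdisj : ∀ i j, i ≠ j → Disjoint (S i) (S j))
    (heq : ∀ i, ∀ Y ⊆ M,
      v i (S i) + g i (S i) (S i ∩ S i) - ∑ j ∈ S i, p j ≥
        v i Y + g i (S i) (S i ∩ Y) - ∑ j ∈ Y, p j)
    (hdom : ∀ i, ∀ Z ⊆ S i,
      g i (S i) (S i) - g i (S i) (S i \ Z) ≤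
        ghat i (S i) (S i) - ghat i (S i) (S i \ Z)) :
    ∀ i, ∀ Y ⊆ M,
      v i (S i) + ghat i (S i) (S i ∩ S i) - ∑ j ∈ S i, p j ≥
        v i Y + ghat i (S i) (S i ∩ Y) - ∑ j ∈ Y, p j := by
  intro i Y hY
  have h1 := heq i Y hY
  have h2 := hdom i (S i \ Y) (Finset.sdiff_subset)
  rw [sdiff_sdiff_right_self] at h2
  simp only [Finset.inter_self, Finset.inf_eq_inter] at *
  linarith
end

section
/- If (S, p) is an E-endowment equilibrium for valuations (v_1,…,v_n) with nonnegative gain functions, and for each i it holds that g_i^{S_i}(S_i) ≤ v_i(S_i), then the social welfare of S is at least half the value of any feasible fractional solution of the configuration LP: 2·Σ_i v_i(S_i) ≥ Σ_i Σ_{T⊆M} x_{i,T}·v_i(T) for every feasible fractional allocation x. -/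
/-- An endowment equilibrium with nonnegative gains satisfying
`g_i^{S_i}(S_i) ≤ v_i(S_i)` achieves at least half the value of any feasible
fractional solution of the configuration LP. -/
theorem stmt7 {α ι : Type*} [DecidableEq α] [DecidableEq ι] [Fintype ι]
    (M : Finset α) (v : ι → Finset α → ℝ)
    (S : ι → Finset α) (p : α → ℝ)
    (g : ι → Finset α → Finset α → ℝ)
    (hS : ∀ i, S i ⊆ M)
    (hclear : Finset.univ.biUnion S = M)
    (hdisj : ∀ i j, i ≠ j → Disjoint (S i) (S j))
    (hv0 : ∀ i, v i ∅ = 0)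
    (hp : ∀ j, 0 ≤ p j)
    (hgnn : ∀ i X Z, 0 ≤ g i X Z)
    (hg0 : ∀ i X, g i X ∅ = 0)
    (hgle : ∀ i, g i (S i) (S i) ≤ v i (S i))
    (heq : ∀ i, ∀ Y ⊆ M,
      v i (S i) + g i (S i) (S i ∩ S i) - ∑ j ∈ S i, p j ≥
        v i Y + g i (S i) (S i ∩ Y) - ∑ j ∈ Y, p j)
    (x : ι → Finset α → ℝ)
    (hxnn : ∀ i T, 0 ≤ x i T)
    (hitem : ∀ j ∈ M, ∑ i, ∑ T ∈ M.powerset, (if j ∈ T then x i T else 0) ≤ 1)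
    (hcons : ∀ i, ∑ T ∈ M.powerset, x i T ≤ 1) :
    2 * ∑ i, v i (S i) ≥ ∑ i, ∑ T ∈ M.powerset, x i T * v i T := by
  set A : ι → ℝ := fun i => 2 * v i (S i) - ∑ j ∈ S i, p j with hA
  -- A i ≥ 0
  have hAnn : ∀ i, 0 ≤ A i := by
    intro i
    have h := heq i ∅ (Finset.empty_subset M)
    simp only [Finset.inter_self, Finset.inter_empty, hv0, hg0, Finset.sum_empty] at h
    have := hgle i
    simp only [hA]
    linarith
  -- key pointwise bound
  have key : ∀ i, ∀ T ∈ M.powerset, v i T ≤ A i + ∑ j ∈ T, p j := by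
    intro i T hT
    have h := heq i T (Finset.mem_powerset.mp hT)
    simp only [Finset.inter_self] at h
    have h1 := hgnn i (S i) (S i ∩ T)
    have h2 := hgle i
    simp only [hA]
    linarith
  -- cross term bound
  have cross : ∑ i, ∑ T ∈ M.powerset, x i T * ∑ j ∈ T, p j ≤ ∑ j ∈ M, p j := by
    have hrw : ∀ i, ∀ T ∈ M.powerset,
        x i T * ∑ j ∈ T, p j = ∑ j ∈ M, (if j ∈ T then x i T else 0) * p j := by
      intro i T hT
      rw [Finset.mul_sum]
      rw [← Finset.sum_subset (Finset.mem_powerset.mp hT)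
        (by intro j _ hj; simp [hj])]
      exact Finset.sum_congr rfl (by intro j hj; simp [hj])
    calc ∑ i, ∑ T ∈ M.powerset, x i T * ∑ j ∈ T, p j
        = ∑ i, ∑ T ∈ M.powerset, ∑ j ∈ M, (if j ∈ T then x i T else 0) * p j := by
          refine Finset.sum_congr rfl fun i _ => Finset.sum_congr rfl (hrw i)
      _ = ∑ i, ∑ j ∈ M, ∑ T ∈ M.powerset, (if j ∈ T then x i T else 0) * p j := by
          exact Finset.sum_congr rfl fun i _ => Finset.sum_comm
      _ = ∑ j ∈ M, ∑ i, ∑ T ∈ M.powerset, (if j ∈ T then x i T else 0) * p j :=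
          Finset.sum_comm
      _ = ∑ j ∈ M, (∑ i, ∑ T ∈ M.powerset, (if j ∈ T then x i T else 0)) * p j := by
          refine Finset.sum_congr rfl fun j _ => ?_
          rw [Finset.sum_mul]
          exact Finset.sum_congr rfl fun i _ => (Finset.sum_mul ..).symm
      _ ≤ ∑ j ∈ M, 1 * p j := by
          refine Finset.sum_le_sum fun j hj => ?_
          exact mul_le_mul_of_nonneg_right (hitem j hj) (hp j)
      _ = ∑ j ∈ M, p j := by simp
  -- partition of M
  have hpart : ∑ j ∈ M, p j = ∑ i, ∑ j ∈ S i, p j := by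
    rw [← hclear, Finset.sum_biUnion]
    intro i _ j _ hij
    exact hdisj i j hij
  -- main bound
  have main : ∑ i, ∑ T ∈ M.powerset, x i T * v i T
      ≤ ∑ i, (A i + ∑ j ∈ S i, p j) := by
    calc ∑ i, ∑ T ∈ M.powerset, x i T * v i T
        ≤ ∑ i, ∑ T ∈ M.powerset, x i T * (A i + ∑ j ∈ T, p j) := by
          refine Finset.sum_le_sum fun i _ => Finset.sum_le_sum fun T hT => ?_
          exact mul_le_mul_of_nonneg_left (key i T hT) (hxnn i T)
      _ = ∑ i, ((∑ T ∈ M.powerset, x i T) * A i)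
            + ∑ i, ∑ T ∈ M.powerset, x i T * ∑ j ∈ T, p j := by
          rw [← Finset.sum_add_distrib]
          refine Finset.sum_congr rfl fun i _ => ?_
          rw [Finset.sum_mul, ← Finset.sum_add_distrib]
          exact Finset.sum_congr rfl fun T _ => by ring
      _ ≤ ∑ i, A i + ∑ j ∈ M, p j := by
          refine add_le_add (Finset.sum_le_sum fun i _ => ?_) cross
          calc (∑ T ∈ M.powerset, x i T) * A i ≤ 1 * A i :=
                mul_le_mul_of_nonneg_right (hcons i) (hAnn i)
            _ = A i := one_mul _
      _ = ∑ i, (A i + ∑ j ∈ S i, p j) := by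
          rw [hpart, Finset.sum_add_distrib]
  have : ∑ i, (A i + ∑ j ∈ S i, p j) = 2 * ∑ i, v i (S i) := by
    rw [Finset.mul_sum]
    refine Finset.sum_congr rfl fun i _ => ?_
    simp [hA]
  linarith [main, this]
end

section
/- If (S, p) is an E-endowment equilibrium for an instance (v_1,…,v_n) and, for every consumer i, p(S_i) ≤ v_i(S_i), then (S, p) is a conditional equilibrium: it is individually rational, all items are allocated, and for every consumer i and every X ⊆ M \ S_i, v_i(X | S_i) ≤ p(X). -/
/-- An endowment equilibrium that is individually rational with respect to the
original valuations is a conditional equilibrium. -/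
theorem stmt8 {α ι : Type*} [DecidableEq α] [DecidableEq ι] [Fintype ι]
    (M : Finset α) (v : ι → Finset α → ℝ)
    (S : ι → Finset α) (p : α → ℝ)
    (g : ι → Finset α → Finset α → ℝ)
    (hS : ∀ i, S i ⊆ M)
    (hclear : Finset.univ.biUnion S = M)
    (hdisj : ∀ i j, i ≠ j → Disjoint (S i) (S j))
    (heq : ∀ i, ∀ Y ⊆ M,
      v i (S i) + g i (S i) (S i ∩ S i) - ∑ j ∈ S i, p j ≥
        v i Y + g i (S i) (S i ∩ Y) - ∑ j ∈ Y, p j)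
    (hIR : ∀ i, ∑ j ∈ S i, p j ≤ v i (S i)) :
    (∀ i, ∑ j ∈ S i, p j ≤ v i (S i)) ∧
    (Finset.univ.biUnion S = M) ∧
    (∀ i, ∀ X ⊆ M \ S i, v i (X ∪ S i) - v i (S i) ≤ ∑ j ∈ X, p j) := by
  refine ⟨hIR, hclear, fun i X hX => ?_⟩
  have hXM : X ∪ S i ⊆ M := Finset.union_subset (hX.trans (Finset.sdiff_subset)) (hS i)
  have h := heq i (X ∪ S i) hXM
  have hint : S i ∩ (X ∪ S i) = S i ∩ S i := by
    rw [Finset.inter_union_distrib_left, Finset.inter_self]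
    have : S i ∩ X = ∅ := by
      rw [Finset.eq_empty_iff_forall_notMem]
      intro a ha
      have := hX (Finset.mem_of_mem_inter_right ha)
      exact (Finset.mem_sdiff.mp this).2 (Finset.mem_of_mem_inter_left ha)
    rw [this, Finset.empty_union]
  have hdis : Disjoint X (S i) := by
    rw [Finset.disjoint_left]
    intro a haX haS
    exact (Finset.mem_sdiff.mp (hX haX)).2 haS
  have hsum : ∑ j ∈ X ∪ S i, p j = ∑ j ∈ X, p j + ∑ j ∈ S i, p j :=
    Finset.sum_union hdis
  rw [hint] at h
  linarith
end

section
/- Let (S, p) be a conditional equilibrium for monotone valuations (v_1,…,v_n), and suppose the endowment environment E satisfies, for every consumer i and Z ⊆ S_i, g_i^{S_i}(Z) - p(Z) ≤ g_i^{S_i}(S_i) - p(S_i). Then (S, p) is an E-endowment equilibrium. -/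
/-- A conditional equilibrium whose gain functions satisfy the price
condition `g(Z) - p(Z) ≤ g(S_i) - p(S_i)` is an endowment equilibrium. -/
theorem stmt9 {α ι : Type*} [DecidableEq α] [DecidableEq ι] [Fintype ι]
    (M : Finset α) (v : ι → Finset α → ℝ)
    (S : ι → Finset α) (p : α → ℝ)
    (g : ι → Finset α → Finset α → ℝ)
    (hS : ∀ i, S i ⊆ M)
    (hmono : ∀ i, ∀ A B : Finset α, A ⊆ B → B ⊆ M → v i A ≤ v i B)
    (hclear : Finset.univ.biUnion S = M)
    (hdisj : ∀ i j, i ≠ j → Disjoint (S i) (S j))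
    (hIR : ∀ i, ∑ j ∈ S i, p j ≤ v i (S i))
    (hout : ∀ i, ∀ X ⊆ M \ S i, v i (X ∪ S i) - v i (S i) ≤ ∑ j ∈ X, p j)
    (hg : ∀ i, ∀ Z ⊆ S i,
      g i (S i) Z - ∑ j ∈ Z, p j ≤ g i (S i) (S i) - ∑ j ∈ S i, p j) :
    ∀ i, ∀ Y ⊆ M,
      v i Y + g i (S i) (S i ∩ Y) - ∑ j ∈ Y, p j ≤
        v i (S i) + g i (S i) (S i) - ∑ j ∈ S i, p j := by
  intro i Y hY
  have hX : Y \ S i ⊆ M \ S i := Finset.sdiff_subset_sdiff hY (Finset.Subset.refl _)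
  have h1 := hout i (Y \ S i) hX
  have h2 : v i Y ≤ v i ((Y \ S i) ∪ S i) := by
    apply hmono i _ _ (by intro a ha; by_cases h : a ∈ S i <;> simp [h, ha])
    exact Finset.union_subset (Finset.sdiff_subset.trans hY) (hS i)
  have h3 := hg i (S i ∩ Y) Finset.inter_subset_left
  have h4 : ∑ j ∈ Y ∩ S i, p j + ∑ j ∈ Y \ S i, p j = ∑ j ∈ Y, p j :=
    Finset.sum_inter_add_sum_sdiff Y (S i) p
  rw [Finset.inter_comm] at h4
  linarith
end

section
/- Every conditional equilibrium (S, p) is an E^AON-endowment equilibrium, where the all-or-nothing endowment effect has gain functions g^X(Z) = v(X) if Z = X and g^X(Z) = 0 otherwise. -/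
/-- Every conditional equilibrium is an endowment equilibrium with respect to
the all-or-nothing endowment effect. -/
theorem stmt10 {α ι : Type*} [DecidableEq α] [DecidableEq ι] [Fintype ι]
    (M : Finset α) (v : ι → Finset α → ℝ)
    (S : ι → Finset α) (p : α → ℝ)
    (hS : ∀ i, S i ⊆ M)
    (hmono : ∀ i, ∀ A B : Finset α, A ⊆ B → B ⊆ M → v i A ≤ v i B)
    (hp : ∀ j, 0 ≤ p j)
    (hclear : Finset.univ.biUnion S = M)
    (hdisj : ∀ i j, i ≠ j → Disjoint (S i) (S j))
    (hIR : ∀ i, ∑ j ∈ S i, p j ≤ v i (S i))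
    (hout : ∀ i, ∀ X ⊆ M \ S i, v i (X ∪ S i) - v i (S i) ≤ ∑ j ∈ X, p j) :
    ∀ i, ∀ Y ⊆ M,
      v i Y + (if S i ∩ Y = S i then v i (S i) else 0) - ∑ j ∈ Y, p j ≤
        v i (S i) + v i (S i) - ∑ j ∈ S i, p j := by
  intro i Y hY
  have hXsub : Y \ S i ⊆ M \ S i := Finset.sdiff_subset_sdiff hY (le_refl _)
  have hkey := hout i (Y \ S i) hXsub
  by_cases h : S i ∩ Y = S i
  · rw [if_pos h]
    have hSY : S i ⊆ Y := by
      intro x hx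
      rw [← h] at hx
      exact (Finset.mem_inter.mp hx).2
    have hU : Y \ S i ∪ S i = Y := Finset.sdiff_union_of_subset hSY
    rw [hU] at hkey
    have hsum : ∑ j ∈ Y, p j = ∑ j ∈ Y \ S i, p j + ∑ j ∈ S i, p j :=
      (Finset.sum_sdiff hSY).symm
    linarith
  · rw [if_neg h]
    have hvY : v i Y ≤ v i (Y \ S i ∪ S i) := by
      rw [Finset.sdiff_union_self_eq_union]
      apply hmono i _ _ Finset.subset_union_left
      exact Finset.union_subset hY (hS i)
    have hpX : ∑ j ∈ Y \ S i, p j ≤ ∑ j ∈ Y, p j :=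
      Finset.sum_le_sum_of_subset_of_nonneg Finset.sdiff_subset (fun j _ _ => hp j)
    have := hIR i
    linarith
end

section
/- Every conditional equilibrium achieves at least half the optimal fractional social welfare: if (S, p) is a conditional equilibrium for (v_1,…,v_n), then 2·Σ_i v_i(S_i) ≥ OPT_frac, where OPT_frac is the optimal value of the configuration LP. -/
/-- Every conditional equilibrium achieves at least half of the optimal
fractional social welfare (the value of any feasible configuration-LP
solution). -/
theorem stmt11 {α ι : Type*} [DecidableEq α] [DecidableEq ι] [Fintype ι]
    (M : Finset α) (v : ι → Finset α → ℝ)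
    (S : ι → Finset α) (p : α → ℝ)
    (hS : ∀ i, S i ⊆ M)
    (hmono : ∀ i, ∀ A B : Finset α, A ⊆ B → B ⊆ M → v i A ≤ v i B)
    (hv0 : ∀ i, v i ∅ = 0)
    (hclear : Finset.univ.biUnion S = M)
    (hdisj : ∀ i j, i ≠ j → Disjoint (S i) (S j))
    (hIR : ∀ i, ∑ j ∈ S i, p j ≤ v i (S i))
    (hout : ∀ i, ∀ X ⊆ M \ S i, v i (X ∪ S i) - v i (S i) ≤ ∑ j ∈ X, p j)
    (x : ι → Finset α → ℝ)
    (hxnn : ∀ i T, 0 ≤ x i T)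
    (hitem : ∀ j ∈ M, ∑ i, ∑ T ∈ M.powerset, (if j ∈ T then x i T else 0) ≤ 1)
    (hcons : ∀ i, ∑ T ∈ M.powerset, x i T ≤ 1) :
    2 * ∑ i, v i (S i) ≥ ∑ i, ∑ T ∈ M.powerset, x i T * v i T := by
  have hvS : ∀ i, 0 ≤ v i (S i) := fun i => by
    have h := hmono i ∅ (S i) (Finset.empty_subset _) (hS i)
    rw [hv0] at h; exact h
  by_cases hone : ∀ i j : ι, i = j
  · -- subsingleton case: at most one consumer
    rcases isEmpty_or_nonempty ι with h | hne
    · simp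
    obtain ⟨i0⟩ := hne
    have huniv : (Finset.univ : Finset ι) = {i0} := by
      ext i; simp [hone i i0]
    have hM : M = S i0 := by
      rw [← hclear, huniv, Finset.singleton_biUnion]
    rw [huniv, Finset.sum_singleton, Finset.sum_singleton]
    have h1 : ∑ T ∈ M.powerset, x i0 T * v i0 T
        ≤ ∑ T ∈ M.powerset, x i0 T * v i0 (S i0) := by
      refine Finset.sum_le_sum fun T hT => ?_
      refine mul_le_mul_of_nonneg_left ?_ (hxnn i0 T)
      have hTM : T ⊆ M := Finset.mem_powerset.mp hT
      rw [hM] at hTM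
      exact hmono i0 T (S i0) hTM (hS i0)
    have h2 : (∑ T ∈ M.powerset, x i0 T) * v i0 (S i0) ≤ v i0 (S i0) := by
      nlinarith [hcons i0, hvS i0]
    rw [← Finset.sum_mul] at h1
    nlinarith [hvS i0]
  · push_neg at hone
    obtain ⟨i1, i2, h12⟩ := hone
    -- all prices of items in M are nonnegative
    have hp : ∀ j ∈ M, 0 ≤ p j := by
      intro j hj
      rw [← hclear] at hj
      obtain ⟨i0, -, hji0⟩ := Finset.mem_biUnion.mp hj
      obtain ⟨i, hi⟩ : ∃ i, i ≠ i0 := by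
        by_cases h : i1 = i0
        · exact ⟨i2, fun hh => h12 (h.trans hh.symm)⟩
        · exact ⟨i1, h⟩
      have hjM : j ∈ M := hclear ▸ hj
      have hjS : j ∉ S i := fun hji =>
        (Finset.disjoint_left.mp (hdisj i i0 hi) hji) hji0
      have hsub : {j} ⊆ M \ S i := by
        intro a ha
        rw [Finset.mem_singleton] at ha
        subst ha
        exact Finset.mem_sdiff.mpr ⟨hjM, hjS⟩
      have h1 := hout i {j} hsub
      rw [Finset.sum_singleton] at h1
      have h2 : v i (S i) ≤ v i ({j} ∪ S i) :=
        hmono i (S i) ({j} ∪ S i) Finset.subset_union_right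
          (Finset.union_subset (by simpa using hjM) (hS i))
      linarith
    -- key per-bundle bound
    have hkey : ∀ i, ∀ T ∈ M.powerset, v i T ≤ v i (S i) + ∑ j ∈ T, p j := by
      intro i T hT
      have hTM : T ⊆ M := Finset.mem_powerset.mp hT
      have hU : T ∪ S i ⊆ M := Finset.union_subset hTM (hS i)
      have h1 : v i T ≤ v i (T ∪ S i) :=
        hmono i T (T ∪ S i) Finset.subset_union_left hU
      have h2 := hout i (T \ S i)
        (Finset.sdiff_subset_sdiff hTM (le_refl _))
      rw [Finset.sdiff_union_self_eq_union] at h2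
      have h3 : ∑ j ∈ T \ S i, p j ≤ ∑ j ∈ T, p j :=
        Finset.sum_le_sum_of_subset_of_nonneg Finset.sdiff_subset
          (fun j hj _ => hp j (hTM hj))
      linarith
    -- bound the LP value
    have hmain : ∑ i, ∑ T ∈ M.powerset, x i T * v i T
        ≤ ∑ i, ∑ T ∈ M.powerset, x i T * (v i (S i) + ∑ j ∈ T, p j) := by
      refine Finset.sum_le_sum fun i _ => Finset.sum_le_sum fun T hT => ?_
      exact mul_le_mul_of_nonneg_left (hkey i T hT) (hxnn i T)
    have hsplit : ∑ i, ∑ T ∈ M.powerset, x i T * (v i (S i) + ∑ j ∈ T, p j)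
        = (∑ i, (∑ T ∈ M.powerset, x i T) * v i (S i))
          + ∑ i, ∑ T ∈ M.powerset, x i T * ∑ j ∈ T, p j := by
      rw [← Finset.sum_add_distrib]
      refine Finset.sum_congr rfl fun i _ => ?_
      rw [Finset.sum_mul, ← Finset.sum_add_distrib]
      exact Finset.sum_congr rfl fun T _ => by ring
    have hA : ∑ i, (∑ T ∈ M.powerset, x i T) * v i (S i) ≤ ∑ i, v i (S i) := by
      refine Finset.sum_le_sum fun i _ => ?_
      nlinarith [hcons i, hvS i]
    have hB : ∑ i, ∑ T ∈ M.powerset, x i T * ∑ j ∈ T, p j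
        ≤ ∑ j ∈ M, p j := by
      have hrw : ∀ i, ∑ T ∈ M.powerset, x i T * ∑ j ∈ T, p j
          = ∑ j ∈ M, (∑ T ∈ M.powerset, if j ∈ T then x i T else 0) * p j := by
        intro i
        have step : ∀ T ∈ M.powerset, x i T * ∑ j ∈ T, p j
            = ∑ j ∈ M, (if j ∈ T then x i T else 0) * p j := by
          intro T hT
          have hTM : T ⊆ M := Finset.mem_powerset.mp hT
          have h1 : ∑ j ∈ T, p j = ∑ j ∈ M, if j ∈ T then p j else 0 := by
            rw [Finset.sum_ite_mem, Finset.inter_eq_right.mpr hTM]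
          rw [h1, Finset.mul_sum]
          refine Finset.sum_congr rfl fun j _ => ?_
          by_cases hjT : j ∈ T <;> simp [hjT]
        rw [Finset.sum_congr rfl step, Finset.sum_comm]
        refine Finset.sum_congr rfl fun j _ => ?_
        rw [Finset.sum_mul]
      calc ∑ i, ∑ T ∈ M.powerset, x i T * ∑ j ∈ T, p j
          = ∑ j ∈ M, (∑ i, ∑ T ∈ M.powerset, if j ∈ T then x i T else 0) * p j := by
            rw [Finset.sum_congr rfl fun i _ => hrw i, Finset.sum_comm]
            exact Finset.sum_congr rfl fun j _ => by rw [Finset.sum_mul]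
        _ ≤ ∑ j ∈ M, p j := by
            refine Finset.sum_le_sum fun j hj => ?_
            nlinarith [hitem j hj, hp j hj]
    have hC : ∑ j ∈ M, p j ≤ ∑ i, v i (S i) := by
      have hdisj' : ((Finset.univ : Finset ι) : Set ι).PairwiseDisjoint S := by
        intro a _ b _ hab
        exact hdisj a b hab
      rw [← hclear, Finset.sum_biUnion hdisj']
      exact Finset.sum_le_sum fun i _ => hIR i
    linarith
end

section
/- For submodular valuations, every locally optimal allocation S with prices p_j = v_{i(j)}({j} | S_{i(j)}\{j}) forms an E^SOM-endowment equilibrium, where g_SOM^X(Z) = Σ_{j∈Z} v({j} | X\{j}). In particular every market with submodular consumers admits an E^SOM-endowment equilibrium. -/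
/-- For submodular valuations, a locally optimal allocation with marginal
prices forms an endowment equilibrium under the sum-of-marginals (SOM)
endowment effect. -/
theorem stmt13 {α ι : Type*} [DecidableEq α] [DecidableEq ι] [Fintype ι]
    (M : Finset α) (v : ι → Finset α → ℝ)
    (S : ι → Finset α) (p : α → ℝ)
    (hS : ∀ i, S i ⊆ M)
    (hmono : ∀ i, ∀ A B : Finset α, A ⊆ B → B ⊆ M → v i A ≤ v i B)
    (hsub : ∀ i, ∀ A B : Finset α, A ⊆ M → B ⊆ M →
      v i A + v i B ≥ v i (A ∪ B) + v i (A ∩ B))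
    (hclear : Finset.univ.biUnion S = M)
    (hdisj : ∀ i j, i ≠ j → Disjoint (S i) (S j))
    (hlocal : ∀ i i', ∀ j ∈ S i,
      v i (S i) + v i' (S i') ≥ v i (S i \ {j}) + v i' (S i' ∪ {j}))
    (hp : ∀ i, ∀ j ∈ S i,
      p j = v i (insert j (S i \ {j})) - v i (S i \ {j})) :
    ∀ i, ∀ Y ⊆ M,
      v i Y + (∑ j ∈ S i ∩ Y, (v i (insert j (S i \ {j})) - v i (S i \ {j})))
          - ∑ j ∈ Y, p j ≤
        v i (S i) + (∑ j ∈ S i, (v i (insert j (S i \ {j})) - v i (S i \ {j})))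
          - ∑ j ∈ S i, p j := by
  intro i Y hY
  -- prices on own items equal marginals
  have hpeq : ∀ j ∈ S i, p j = v i (insert j (S i \ {j})) - v i (S i \ {j}) :=
    hp i
  have hSum1 : ∑ j ∈ S i, p j
      = ∑ j ∈ S i, (v i (insert j (S i \ {j})) - v i (S i \ {j})) :=
    Finset.sum_congr rfl hpeq
  have hSum2 : ∑ j ∈ S i ∩ Y, p j
      = ∑ j ∈ S i ∩ Y, (v i (insert j (S i \ {j})) - v i (S i \ {j})) :=
    Finset.sum_congr rfl (fun j hj => hpeq j (Finset.mem_of_mem_inter_left hj))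
  -- split price sum over Y
  have hsplit : ∑ j ∈ Y, p j = ∑ j ∈ S i ∩ Y, p j + ∑ j ∈ Y \ S i, p j := by
    rw [Finset.inter_comm]
    exact (Finset.sum_inter_add_sum_sdiff Y (S i) p).symm
  -- for items not in S i, price dominates marginal at S i
  have hpm : ∀ j ∈ Y \ S i, v i (insert j (S i)) - v i (S i) ≤ p j := by
    intro j hj
    obtain ⟨hjY, hjS⟩ := Finset.mem_sdiff.mp hj
    have hjM : j ∈ M := hY hjY
    rw [← hclear] at hjM
    obtain ⟨i', -, hji'⟩ := Finset.mem_biUnion.mp hjM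
    have hloc := hlocal i' i j hji'
    have hpj := hp i' j hji'
    have hins : insert j (S i' \ {j}) = S i' := by
      rw [← Finset.erase_eq]; exact Finset.insert_erase hji'
    rw [hins] at hpj
    have : S i ∪ {j} = insert j (S i) := by ext x; simp [or_comm]
    rw [this] at hloc
    linarith
  -- submodular subadditivity over added items
  have key : ∀ T : Finset α, T ⊆ M → Disjoint T (S i) →
      v i (S i ∪ T) ≤ v i (S i) + ∑ j ∈ T, (v i (insert j (S i)) - v i (S i)) := by
    intro T
    induction T using Finset.induction_on with
    | empty => intro _ _; simp
    | @insert a T ha IH =>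
      intro hTM hTd
      have haM : a ∈ M := hTM (Finset.mem_insert_self a T)
      have haS : a ∉ S i := Finset.disjoint_left.mp hTd (Finset.mem_insert_self a T)
      have hTM' : T ⊆ M := (Finset.subset_insert a T).trans hTM
      have hTd' : Disjoint T (S i) :=
        Finset.disjoint_of_subset_left (Finset.subset_insert a T) hTd
      have IH' := IH hTM' hTd'
      have hsub' := hsub i (S i ∪ T) (insert a (S i))
        (Finset.union_subset (hS i) hTM')
        (Finset.insert_subset haM (hS i))
      have hU : (S i ∪ T) ∪ insert a (S i) = insert a (S i ∪ T) := by
        ext x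
        simp only [Finset.mem_union, Finset.mem_insert]
        tauto
      have hI : (S i ∪ T) ∩ insert a (S i) = S i := by
        ext x
        simp only [Finset.mem_inter, Finset.mem_union, Finset.mem_insert]
        constructor
        · rintro ⟨hx1, hx2⟩
          rcases hx2 with rfl | hx2
          · rcases hx1 with hx1 | hx1
            · exact hx1
            · exact absurd hx1 ha
          · exact hx2
        · intro hx; exact ⟨Or.inl hx, Or.inr hx⟩
      rw [hU, hI] at hsub'
      have hUnion : S i ∪ insert a T = insert a (S i ∪ T) := by
        ext x
        simp only [Finset.mem_union, Finset.mem_insert]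
        tauto
      rw [hUnion, Finset.sum_insert ha]
      linarith
  -- apply to Y \ S i
  have hkey := key (Y \ S i) ((Finset.sdiff_subset).trans hY)
    (Finset.sdiff_disjoint)
  have hYsub : Y ⊆ S i ∪ (Y \ S i) := by
    intro x hx
    rcases Finset.mem_union.mp (Finset.mem_union_left (Y \ S i)
      (by exact hx : x ∈ Y)) with _ | _ <;>
    · by_cases hxS : x ∈ S i
      · exact Finset.mem_union_left _ hxS
      · exact Finset.mem_union_right _ (Finset.mem_sdiff.mpr ⟨hx, hxS⟩)
  have hvy : v i Y ≤ v i (S i ∪ (Y \ S i)) :=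
    hmono i Y (S i ∪ (Y \ S i)) hYsub
      (Finset.union_subset (hS i) ((Finset.sdiff_subset).trans hY))
  have hsumle : ∑ j ∈ Y \ S i, (v i (insert j (S i)) - v i (S i))
      ≤ ∑ j ∈ Y \ S i, p j := Finset.sum_le_sum hpm
  linarith
end

section
/- For submodular v, the sum-of-marginals gain satisfies g_SOM^X(X) = Σ_{j∈X} v({j} | X\{j}) ≤ v(X) for every X ⊆ M. Consequently, every E^SOM-endowment equilibrium for submodular consumers gives at least half the optimal (fractional) social welfare. -/
lemma lemA14 {α : Type*} [DecidableEq α] (M : Finset α) (v : Finset α → ℝ)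
    (hv0 : v ∅ = 0)
    (hsub : ∀ A B : Finset α, A ⊆ M → B ⊆ M →
      v A + v B ≥ v (A ∪ B) + v (A ∩ B)) :
    ∀ X ⊆ M, ∑ j ∈ X, (v (insert j (X \ {j})) - v (X \ {j})) ≤ v X := by
  intro X
  induction X using Finset.induction_on with
  | empty => intro _; simp [hv0]
  | @insert a X ha ih =>
    intro hXM
    have hXM' : X ⊆ M := (Finset.subset_insert a X).trans hXM
    have haM : a ∈ M := hXM (Finset.mem_insert_self a X)
    have h1 : insert a X \ {a} = X := by
      rw [Finset.sdiff_singleton_eq_erase, Finset.erase_insert ha]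
    rw [Finset.sum_insert ha, h1]
    have h2 : insert a (X : Finset α) ⊆ M := hXM
    have hstep : ∀ j ∈ X,
        v (insert j (insert a X \ {j})) - v (insert a X \ {j}) ≤
        v (insert j (X \ {j})) - v (X \ {j}) := by
      intro j hj
      have hja : j ≠ a := by rintro rfl; exact ha hj
      have e1 : insert a X \ {j} = insert a (X \ {j}) := by
        ext y; simp only [Finset.mem_sdiff, Finset.mem_insert, Finset.mem_singleton]
        constructor
        · rintro ⟨h | h, hy⟩
          · exact Or.inl h
          · exact Or.inr ⟨h, hy⟩
        · rintro (rfl | ⟨h, hy⟩)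
          · exact ⟨Or.inl rfl, hja.symm⟩
          · exact ⟨Or.inr h, hy⟩
      have e2 : insert j (X \ {j}) = X := by
        rw [Finset.sdiff_singleton_eq_erase, Finset.insert_erase hj]
      have e3 : insert j (insert a (X \ {j})) = insert a X := by
        rw [Finset.insert_comm, e2]
      have hsm := hsub X (insert a (X \ {j})) hXM'
        (by intro y hy; simp only [Finset.mem_insert] at hy
            rcases hy with rfl | hy
            · exact haM
            · exact hXM' (Finset.mem_sdiff.mp hy).1)
      have eU : X ∪ insert a (X \ {j}) = insert a X := by
        ext y; simp only [Finset.mem_union, Finset.mem_insert, Finset.mem_sdiff,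
          Finset.mem_singleton]
        constructor
        · rintro (h | rfl | ⟨h, _⟩) <;> tauto
        · rintro (rfl | h) <;> tauto
      have eI : X ∩ insert a (X \ {j}) = X \ {j} := by
        ext y; simp only [Finset.mem_inter, Finset.mem_insert, Finset.mem_sdiff,
          Finset.mem_singleton]
        constructor
        · rintro ⟨hy, rfl | ⟨_, hne⟩⟩
          · exact absurd hy ha
          · exact ⟨hy, hne⟩
        · rintro ⟨hy, hne⟩; exact ⟨hy, Or.inr ⟨hy, hne⟩⟩
      rw [eU, eI] at hsm
      rw [e1, e3, e2]
      linarith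
    have hsum : ∑ j ∈ X, (v (insert j (insert a X \ {j})) - v (insert a X \ {j})) ≤
        ∑ j ∈ X, (v (insert j (X \ {j})) - v (X \ {j})) :=
      Finset.sum_le_sum hstep
    have := ih hXM'
    linarith


/-- (a) For monotone submodular `v`, the SOM gain at the full set is at most
`v(X)`. (b) Consequently, every SOM-endowment equilibrium for submodular
consumers achieves at least half the optimal fractional welfare. -/
theorem stmt14 {α ι : Type*} [DecidableEq α] [DecidableEq ι] [Fintype ι]
    (M : Finset α) (v : ι → Finset α → ℝ)
    (S : ι → Finset α) (p : α → ℝ)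
    (hS : ∀ i, S i ⊆ M)
    (hmono : ∀ i, ∀ A B : Finset α, A ⊆ B → B ⊆ M → v i A ≤ v i B)
    (hv0 : ∀ i, v i ∅ = 0)
    (hsub : ∀ i, ∀ A B : Finset α, A ⊆ M → B ⊆ M →
      v i A + v i B ≥ v i (A ∪ B) + v i (A ∩ B))
    (hclear : Finset.univ.biUnion S = M)
    (hdisj : ∀ i j, i ≠ j → Disjoint (S i) (S j))
    (hp : ∀ j, 0 ≤ p j)
    (heq : ∀ i, ∀ Y ⊆ M,
      v i Y + (∑ j ∈ S i ∩ Y, (v i (insert j (S i \ {j})) - v i (S i \ {j})))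
          - ∑ j ∈ Y, p j ≤
        v i (S i) + (∑ j ∈ S i, (v i (insert j (S i \ {j})) - v i (S i \ {j})))
          - ∑ j ∈ S i, p j)
    (x : ι → Finset α → ℝ)
    (hxnn : ∀ i T, 0 ≤ x i T)
    (hitem : ∀ j ∈ M, ∑ i, ∑ T ∈ M.powerset, (if j ∈ T then x i T else 0) ≤ 1)
    (hcons : ∀ i, ∑ T ∈ M.powerset, x i T ≤ 1) :
    (∀ i, ∀ X ⊆ M,
      ∑ j ∈ X, (v i (insert j (X \ {j})) - v i (X \ {j})) ≤ v i X) ∧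
    2 * ∑ i, v i (S i) ≥ ∑ i, ∑ T ∈ M.powerset, x i T * v i T := by
  have partA : ∀ i, ∀ X ⊆ M,
      ∑ j ∈ X, (v i (insert j (X \ {j})) - v i (X \ {j})) ≤ v i X :=
    fun i => lemA14 M (v i) (hv0 i) (hsub i)
  refine ⟨partA, ?_⟩
  have hRHS : ∀ i, 0 ≤ v i (S i)
      + (∑ j ∈ S i, (v i (insert j (S i \ {j})) - v i (S i \ {j})))
      - ∑ j ∈ S i, p j := by
    intro i
    have h := heq i ∅ (Finset.empty_subset M)
    rw [Finset.inter_empty, Finset.sum_empty, Finset.sum_empty, hv0 i] at h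
    linarith
  have hgle : ∀ i, (∑ j ∈ S i, (v i (insert j (S i \ {j})) - v i (S i \ {j})))
      ≤ v i (S i) := fun i => partA i (S i) (hS i)
  have hB : ∀ i, 0 ≤ 2 * v i (S i) - ∑ j ∈ S i, p j := by
    intro i; have h1 := hRHS i; have h2 := hgle i; linarith
  have key : ∀ i, ∀ Y ⊆ M,
      v i Y ≤ (2 * v i (S i) - ∑ j ∈ S i, p j) + ∑ j ∈ Y, p j := by
    intro i Y hY
    have h1 := heq i Y hY
    have h2 : 0 ≤ ∑ j ∈ S i ∩ Y, (v i (insert j (S i \ {j})) - v i (S i \ {j})) := by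
      apply Finset.sum_nonneg
      intro j hj
      have hjS : j ∈ S i := (Finset.mem_inter.mp hj).1
      have : v i (S i \ {j}) ≤ v i (insert j (S i \ {j})) := by
        apply hmono i _ _ (Finset.subset_insert _ _)
        intro y hy
        simp only [Finset.mem_insert, Finset.mem_sdiff] at hy
        rcases hy with rfl | ⟨hy, _⟩
        · exact hS i hjS
        · exact hS i hy
      linarith
    have h3 := hgle i
    linarith
  have step1 : ∑ i, ∑ T ∈ M.powerset, x i T * v i T ≤
      ∑ i, ∑ T ∈ M.powerset,
        x i T * ((2 * v i (S i) - ∑ j ∈ S i, p j) + ∑ j ∈ T, p j) := by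
    apply Finset.sum_le_sum; intro i _
    apply Finset.sum_le_sum; intro T hT
    exact mul_le_mul_of_nonneg_left (key i T (Finset.mem_powerset.mp hT)) (hxnn i T)
  have split : ∑ i, ∑ T ∈ M.powerset,
        x i T * ((2 * v i (S i) - ∑ j ∈ S i, p j) + ∑ j ∈ T, p j)
      = (∑ i, ∑ T ∈ M.powerset, x i T * (2 * v i (S i) - ∑ j ∈ S i, p j))
        + ∑ i, ∑ T ∈ M.powerset, x i T * ∑ j ∈ T, p j := by
    rw [← Finset.sum_add_distrib]
    congr 1; ext i
    rw [← Finset.sum_add_distrib]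
    congr 1; ext T
    ring
  have part1 : ∑ i, ∑ T ∈ M.powerset, x i T * (2 * v i (S i) - ∑ j ∈ S i, p j)
      ≤ ∑ i, (2 * v i (S i) - ∑ j ∈ S i, p j) := by
    apply Finset.sum_le_sum; intro i _
    rw [← Finset.sum_mul]
    calc (∑ T ∈ M.powerset, x i T) * (2 * v i (S i) - ∑ j ∈ S i, p j)
        ≤ 1 * (2 * v i (S i) - ∑ j ∈ S i, p j) :=
          mul_le_mul_of_nonneg_right (hcons i) (hB i)
      _ = _ := one_mul _
  have part2 : ∑ i, ∑ T ∈ M.powerset, x i T * ∑ j ∈ T, p j ≤ ∑ j ∈ M, p j := by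
    have rewr : ∀ i, ∀ T ∈ M.powerset,
        x i T * ∑ j ∈ T, p j = ∑ j ∈ M, (if j ∈ T then x i T else 0) * p j := by
      intro i T hT
      have hTM := Finset.mem_powerset.mp hT
      rw [Finset.mul_sum]
      rw [← Finset.sum_subset hTM (by intro j _ hj; simp [hj])]
      apply Finset.sum_congr rfl
      intro j hj; simp [hj]
    calc ∑ i, ∑ T ∈ M.powerset, x i T * ∑ j ∈ T, p j
        = ∑ i, ∑ T ∈ M.powerset, ∑ j ∈ M, (if j ∈ T then x i T else 0) * p j := by
          apply Finset.sum_congr rfl; intro i _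
          exact Finset.sum_congr rfl (rewr i)
      _ = ∑ i, ∑ j ∈ M, ∑ T ∈ M.powerset, (if j ∈ T then x i T else 0) * p j := by
          apply Finset.sum_congr rfl; intro i _
          exact Finset.sum_comm
      _ = ∑ j ∈ M, ∑ i, ∑ T ∈ M.powerset, (if j ∈ T then x i T else 0) * p j :=
          Finset.sum_comm
      _ = ∑ j ∈ M, (∑ i, ∑ T ∈ M.powerset, (if j ∈ T then x i T else 0)) * p j := by
          apply Finset.sum_congr rfl; intro j _
          rw [Finset.sum_mul]
          apply Finset.sum_congr rfl; intro i _
          rw [Finset.sum_mul]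
      _ ≤ ∑ j ∈ M, 1 * p j := by
          apply Finset.sum_le_sum; intro j hj
          exact mul_le_mul_of_nonneg_right (hitem j hj) (hp j)
      _ = ∑ j ∈ M, p j := by simp
  have partition : ∑ i, ∑ j ∈ S i, p j = ∑ j ∈ M, p j := by
    rw [← hclear, Finset.sum_biUnion]
    intro i _ j _ hij
    exact hdisj i j hij
  have expand : ∑ i, (2 * v i (S i) - ∑ j ∈ S i, p j)
      = 2 * ∑ i, v i (S i) - ∑ i, ∑ j ∈ S i, p j := by
    rw [Finset.sum_sub_distrib, Finset.mul_sum]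
  rw [expand, partition] at part1
  rw [split] at step1
  linarith
end

section
/- Let (v_1,…,v_n) be monotone valuations, S an optimal (welfare-maximizing) allocation, and define item prices p_j = v_{i(j)}(S_{i(j)}) for each item j, where i(j) is the owner of j in S. Then (S, p) is an E^PROP-endowment equilibrium, where g_PROP^X(Z) = |Z|·v(X). In particular, every market (with arbitrary monotone valuations) admits an endowment equilibrium with optimal welfare under E^PROP. -/
/-- For arbitrary monotone valuations, any optimal allocation with prices
`p_j = v_{i(j)}(S_{i(j)})` forms an endowment equilibrium under the
proportional endowment effect `g^X(Z) = |Z|·v(X)`. -/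
theorem stmt15 {α ι : Type*} [DecidableEq α] [DecidableEq ι] [Fintype ι]
    (M : Finset α) (v : ι → Finset α → ℝ)
    (S : ι → Finset α) (p : α → ℝ)
    (hS : ∀ i, S i ⊆ M)
    (hmono : ∀ i, ∀ A B : Finset α, A ⊆ B → B ⊆ M → v i A ≤ v i B)
    (hv0 : ∀ i, v i ∅ = 0)
    (hnn : ∀ i X, 0 ≤ v i X)
    (hclear : Finset.univ.biUnion S = M)
    (hdisj : ∀ i j, i ≠ j → Disjoint (S i) (S j))
    (hopt : ∀ S' : ι → Finset α, (∀ i, S' i ⊆ M) →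
      (∀ i j, i ≠ j → Disjoint (S' i) (S' j)) →
      ∑ i, v i (S' i) ≤ ∑ i, v i (S i))
    (hp : ∀ i, ∀ j ∈ S i, p j = v i (S i)) :
    ∀ i, ∀ Y ⊆ M,
      v i Y + ((S i ∩ Y).card : ℝ) * v i (S i) - ∑ j ∈ Y, p j ≤
        v i (S i) + ((S i).card : ℝ) * v i (S i) - ∑ j ∈ S i, p j := by
  intro i Y hY
  -- prices on S i
  have hpSi : ∑ j ∈ S i, p j = ((S i).card : ℝ) * v i (S i) := by
    rw [Finset.sum_congr rfl (fun j hj => hp i j hj), Finset.sum_const, nsmul_eq_mul]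
  -- split the price of Y
  have hYsplit : ∑ j ∈ Y, p j = ∑ j ∈ Y ∩ S i, p j + ∑ j ∈ Y \ S i, p j :=
    (Finset.sum_inter_add_sum_sdiff Y (S i) p).symm
  have hpinter : ∑ j ∈ Y ∩ S i, p j = ((S i ∩ Y).card : ℝ) * v i (S i) := by
    rw [Finset.sum_congr rfl (fun j hj => hp i j (Finset.mem_inter.mp hj).2),
      Finset.sum_const, nsmul_eq_mul, Finset.inter_comm]
  -- key inequality
  have hkey : v i Y ≤ v i (S i) + ∑ j ∈ Y \ S i, p j := by
    set S' : ι → Finset α := fun k => if k = i then S i ∪ Y else S k \ Y with hS'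
    have hsub : ∀ k, S' k ⊆ M := by
      intro k
      simp only [hS']
      split
      · exact Finset.union_subset (hS i) hY
      · exact (Finset.sdiff_subset).trans (hS k)
    have haux : ∀ l, l ≠ i → Disjoint (S i ∪ Y) (S l \ Y) := by
      intro l hl
      refine Finset.disjoint_union_left.mpr
        ⟨(hdisj i l (fun h => hl h.symm)).mono_right Finset.sdiff_subset,
          Finset.sdiff_disjoint.symm⟩
    have hdisj' : ∀ k l, k ≠ l → Disjoint (S' k) (S' l) := by
      intro k l hkl
      simp only [hS']
      split <;> split <;> rename_i hk hl
      · exact absurd (hk.trans hl.symm) hkl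
      · subst hk; exact haux l hl
      · subst hl; exact (haux k hk).symm
      · exact (hdisj k l hkl).mono Finset.sdiff_subset Finset.sdiff_subset
    have hO := hopt S' hsub hdisj'
    rw [← Finset.add_sum_erase Finset.univ (fun k => v k (S' k)) (Finset.mem_univ i),
        ← Finset.add_sum_erase Finset.univ (fun k => v k (S k)) (Finset.mem_univ i)] at hO
    have hSi' : S' i = S i ∪ Y := by simp [hS']
    have hSk' : ∀ k ∈ Finset.univ.erase i, S' k = S k \ Y := by
      intro k hk
      simp [hS', Finset.ne_of_mem_erase hk]
    rw [hSi', Finset.sum_congr rfl (fun k hk => by rw [hSk' k hk])] at hO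
    -- price sum over Y \ S i
    have hcover : Y \ S i = Finset.univ.biUnion (fun k => (Y \ S i) ∩ S k) := by
      ext j
      simp only [Finset.mem_biUnion, Finset.mem_inter, Finset.mem_univ, true_and]
      constructor
      · intro hj
        have hjM : j ∈ M := hY (Finset.mem_sdiff.mp hj).1
        rw [← hclear] at hjM
        obtain ⟨k, -, hk⟩ := Finset.mem_biUnion.mp hjM
        exact ⟨k, hj, hk⟩
      · rintro ⟨k, hj, -⟩; exact hj
    have hpd : ∑ j ∈ Y \ S i, p j = ∑ k, ∑ j ∈ (Y \ S i) ∩ S k, p j := by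
      conv_lhs => rw [hcover]
      exact Finset.sum_biUnion (fun k _ l _ hkl =>
        (hdisj k l hkl).mono Finset.inter_subset_right Finset.inter_subset_right)
    have hpk : ∀ k, ∑ j ∈ (Y \ S i) ∩ S k, p j = (((Y \ S i) ∩ S k).card : ℝ) * v k (S k) := by
      intro k
      rw [Finset.sum_congr rfl (fun j hj => hp k j (Finset.mem_inter.mp hj).2),
        Finset.sum_const, nsmul_eq_mul]
    have hzero : ((Y \ S i) ∩ S i).card = 0 := by
      simp [Finset.sdiff_inter_self]
    -- termwise bound for k ≠ i
    have hterm : ∀ k ∈ Finset.univ.erase i,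
        v k (S k) - v k (S k \ Y) ≤ (((Y \ S i) ∩ S k).card : ℝ) * v k (S k) := by
      intro k hk
      have hki : k ≠ i := Finset.ne_of_mem_erase hk
      by_cases hc : (Y \ S i) ∩ S k = ∅
      · have : S k \ Y = S k := by
          rw [Finset.sdiff_eq_self_iff_disjoint]
          rw [Finset.disjoint_left]
          intro j hjk hjY
          have hjnSi : j ∉ S i := fun hji =>
            (Finset.disjoint_left.mp (hdisj k i hki) hjk) hji
          have : j ∈ (Y \ S i) ∩ S k := Finset.mem_inter.mpr ⟨Finset.mem_sdiff.mpr ⟨hjY, hjnSi⟩, hjk⟩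
          simp [hc] at this
        rw [this, hc]
        simp
      · have hcard : 1 ≤ (((Y \ S i) ∩ S k).card : ℝ) := by
          have := Finset.card_pos.mpr (Finset.nonempty_of_ne_empty hc)
          exact_mod_cast this
        have h1 : v k (S k) - v k (S k \ Y) ≤ v k (S k) := by
          have := hnn k (S k \ Y); linarith
        have h2 : v k (S k) ≤ (((Y \ S i) ∩ S k).card : ℝ) * v k (S k) :=
          le_mul_of_one_le_left (hnn k (S k)) hcard
        linarith
    have hsum : ∑ k ∈ Finset.univ.erase i, (v k (S k) - v k (S k \ Y))
        ≤ ∑ j ∈ Y \ S i, p j := by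
      rw [hpd, Finset.sum_congr rfl (fun k _ => hpk k),
        ← Finset.add_sum_erase Finset.univ
          (fun k => (((Y \ S i) ∩ S k).card : ℝ) * v k (S k)) (Finset.mem_univ i)]
      calc ∑ k ∈ Finset.univ.erase i, (v k (S k) - v k (S k \ Y))
          ≤ ∑ k ∈ Finset.univ.erase i, (((Y \ S i) ∩ S k).card : ℝ) * v k (S k) :=
            Finset.sum_le_sum hterm
        _ ≤ _ := by simp [hzero]
    have hmonoY : v i Y ≤ v i (S i ∪ Y) :=
      hmono i Y (S i ∪ Y) Finset.subset_union_right (Finset.union_subset (hS i) hY)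
    rw [Finset.sum_sub_distrib] at hsum
    linarith
  rw [hYsplit, hpinter, hpSi]
  linarith
end

section
/- For m ≥ 3 items, consider the market with consumer 1 subadditive, v_1(M) = 2, v_1(∅) = 0, v_1(X) = 1 for all other X, and consumer 2 unit demand with v_2(X) = √(2/m) for all nonempty X. Then for any β with m > 2(β+1)², and any endowment environment E with g_i^X(X) ≤ β·v_i(X) for all i and X, no E-endowment equilibrium exists. -/
/-- Non-existence for subadditive valuations: in the market with one
subadditive and one unit-demand consumer, no endowment environment whose
gains are bounded by `β·v` with `m > 2(β+1)²` admits an endowment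
equilibrium. -/
theorem stmt16 {α : Type*} [DecidableEq α] (m : ℕ) (hm : 3 ≤ m)
    (M : Finset α) (hcard : M.card = m)
    (β : ℝ) (hβ : (m : ℝ) > 2 * (β + 1) ^ 2)
    (v₁ v₂ : Finset α → ℝ)
    (hv₁ : ∀ X ⊆ M, v₁ X = if X = M then 2 else if X = ∅ then 0 else 1)
    (hv₂ : ∀ X ⊆ M, v₂ X = if X = ∅ then 0 else Real.sqrt (2 / m))
    (g₁ g₂ : Finset α → Finset α → ℝ)
    (hg₁nn : ∀ X Z, 0 ≤ g₁ X Z) (hg₂nn : ∀ X Z, 0 ≤ g₂ X Z)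
    (hg₁0 : ∀ X, g₁ X ∅ = 0) (hg₂0 : ∀ X, g₂ X ∅ = 0)
    (hg₁mono : ∀ X, ∀ Z ⊆ X, g₁ X Z ≤ g₁ X X)
    (hg₂mono : ∀ X, ∀ Z ⊆ X, g₂ X Z ≤ g₂ X X)
    (hg₁β : ∀ X ⊆ M, g₁ X X ≤ β * v₁ X)
    (hg₂β : ∀ X ⊆ M, g₂ X X ≤ β * v₂ X) :
    ¬ ∃ (S₁ S₂ : Finset α) (p : α → ℝ),
        S₁ ⊆ M ∧ S₂ ⊆ M ∧ Disjoint S₁ S₂ ∧ S₁ ∪ S₂ = M ∧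
        (∀ Y ⊆ M, v₁ Y + g₁ S₁ (S₁ ∩ Y) - ∑ j ∈ Y, p j ≤
          v₁ S₁ + g₁ S₁ S₁ - ∑ j ∈ S₁, p j) ∧
        (∀ Y ⊆ M, v₂ Y + g₂ S₂ (S₂ ∩ Y) - ∑ j ∈ Y, p j ≤
          v₂ S₂ + g₂ S₂ S₂ - ∑ j ∈ S₂, p j) := by
  rintro ⟨S₁, S₂, p, hS₁, hS₂, hdisj, hunion, h1, h2⟩
  have hm0 : (0:ℝ) < m := by positivity
  have hMne : M ≠ ∅ := by
    intro h
    rw [h, Finset.card_empty] at hcard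
    omega
  set s := Real.sqrt (2 / m) with hs
  have hspos : 0 < s := Real.sqrt_pos.mpr (by positivity)
  have hms2 : (m:ℝ) * s ^ 2 = 2 := by
    rw [hs, Real.sq_sqrt (by positivity)]
    field_simp
  have hsumM : ∑ j ∈ M, p j = ∑ j ∈ S₁, p j + ∑ j ∈ S₂, p j := by
    rw [← hunion, Finset.sum_union hdisj]
  by_cases hS1M : S₁ = M
  · subst hS1M
    have hS2e : S₂ = ∅ :=
      Finset.eq_empty_of_forall_notMem fun x hx =>
        Finset.disjoint_right.mp hdisj hx (hS₂ hx)
    subst hS2e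
    have hA := h1 ∅ (Finset.empty_subset S₁)
    rw [hv₁ ∅ (Finset.empty_subset S₁), hv₁ S₁ (subset_refl S₁)] at hA
    simp only [if_neg (Ne.symm hMne), if_pos rfl, if_true, eq_self_iff_true,
      Finset.sum_empty, Finset.inter_empty, hg₁0] at hA
    have hgb : g₁ S₁ S₁ ≤ β * 2 := by
      have h := hg₁β S₁ (subset_refl S₁)
      rw [hv₁ S₁ (subset_refl S₁), if_pos rfl] at h
      exact h
    have hPsum : ∑ j ∈ S₁, p j ≤ 2 + 2 * β := by linarith
    have hpj : ∀ j ∈ S₁, s ≤ p j := by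
      intro j hj
      have hB := h2 {j} (Finset.singleton_subset_iff.mpr hj)
      rw [hv₂ {j} (Finset.singleton_subset_iff.mpr hj),
        hv₂ ∅ (Finset.empty_subset S₁),
        if_neg (Finset.singleton_ne_empty j), if_pos rfl] at hB
      simp only [Finset.empty_inter, hg₂0, Finset.sum_singleton,
        Finset.sum_empty] at hB
      linarith
    have hlow : (m : ℝ) * s ≤ ∑ j ∈ S₁, p j := by
      have h := Finset.card_nsmul_le_sum S₁ p s hpj
      rwa [hcard, nsmul_eq_mul] at h
    have hmspos : 0 < (m:ℝ) * s := by positivity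
    have hch : (m:ℝ) * s ≤ 2 + 2 * β := le_trans hlow hPsum
    nlinarith [mul_self_le_mul_self hmspos.le hch, hms2, hβ, hm0, hspos]
  · have hS2ne : S₂ ≠ ∅ := by
      intro h
      exact hS1M (by rw [← hunion, h, Finset.union_empty])
    have hA := h1 M (subset_refl M)
    rw [hv₁ M (subset_refl M), if_pos rfl,
      Finset.inter_eq_left.mpr hS₁] at hA
    have hv1S1 : v₁ S₁ ≤ 1 := by
      rw [hv₁ S₁ hS₁, if_neg hS1M]
      split_ifs <;> norm_num
    have hlow : (1:ℝ) ≤ ∑ j ∈ S₂, p j := by linarith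
    have hB := h2 ∅ (Finset.empty_subset M)
    rw [hv₂ ∅ (Finset.empty_subset M), if_pos rfl,
      hv₂ S₂ hS₂, if_neg hS2ne] at hB
    simp only [Finset.inter_empty, hg₂0, Finset.sum_empty] at hB
    have hgb : g₂ S₂ S₂ ≤ β * s := by
      have h := hg₂β S₂ hS₂
      rwa [hv₂ S₂ hS₂, if_neg hS2ne] at h
    have hup : ∑ j ∈ S₂, p j ≤ (1 + β) * s := by linarith
    have hkey : (1:ℝ) ≤ (1 + β) * s := le_trans hlow hup
    nlinarith [mul_le_mul hkey hkey (by norm_num) (by linarith : (0:ℝ) ≤ (1+β)*s)]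
end

section
/- Let E be a significant endowment environment (g_i^X(X) ≥ v_i(X) for all i, X). Let S = (S_1,…,S_n) be any allocation and set bundle prices p_i ≤ g_i^{S_i}(S_i). Then for every consumer i and every set of indices A ⊆ [n] \ {i}, the endowed utility from the bundles indexed by A ∪ {i} is at least the endowed utility from the bundles indexed by A alone: v_i^{S_i}(∪_{k∈A∪{i}} S_k) - Σ_{k∈A∪{i}} p_k ≥ v_i^{S_i}(∪_{k∈A} S_k) - Σ_{k∈A} p_k. -/
/-- No need to swap: under a significant endowment environment and bundle
prices `q_i ≤ g_i^{S_i}(S_i)`, adding one's own bundle to any set of other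
bundles weakly improves endowed utility. -/
theorem stmt17 {α ι : Type*} [DecidableEq α] [DecidableEq ι]
    (M : Finset α) (v : ι → Finset α → ℝ) (S : ι → Finset α)
    (hS : ∀ i, S i ⊆ M)
    (hdisj : ∀ i j, i ≠ j → Disjoint (S i) (S j))
    (hmono : ∀ i, ∀ A B : Finset α, A ⊆ B → B ⊆ M → v i A ≤ v i B)
    (g : ι → Finset α → Finset α → ℝ)
    (hg0 : ∀ i X, g i X ∅ = 0)
    (hsig : ∀ i X, v i X ≤ g i X X)
    (q : ι → ℝ) (hq : ∀ i, q i ≤ g i (S i) (S i)) :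
    ∀ (i : ι) (A : Finset ι), i ∉ A →
      v i ((insert i A).biUnion S) + g i (S i) (S i ∩ (insert i A).biUnion S)
          - ∑ k ∈ insert i A, q k ≥
        v i (A.biUnion S) + g i (S i) (S i ∩ A.biUnion S) - ∑ k ∈ A, q k := by
  intro i A hiA
  have hb : (insert i A).biUnion S = S i ∪ A.biUnion S := Finset.biUnion_insert ..
  have h1 : S i ∩ (insert i A).biUnion S = S i := by
    rw [hb]; exact Finset.inter_eq_left.mpr Finset.subset_union_left
  have h2 : S i ∩ A.biUnion S = ∅ := by
    apply Finset.eq_empty_of_forall_notMem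
    intro x hx
    rw [Finset.mem_inter, Finset.mem_biUnion] at hx
    obtain ⟨hx1, k, hk, hx2⟩ := hx
    exact Finset.notMem_empty x ((hdisj i k (fun h => hiA (h ▸ hk))).le_bot (Finset.mem_inter.mpr ⟨hx1, hx2⟩))
  rw [h1, hb, h2, hg0, Finset.sum_insert hiA]
  have hsub : A.biUnion S ⊆ M := by
    intro x hx
    obtain ⟨k, _, hk⟩ := Finset.mem_biUnion.mp hx
    exact hS k hk
  have hmon := hmono i (A.biUnion S) (S i ∪ A.biUnion S) Finset.subset_union_right
    (Finset.union_subset (hS i) hsub)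
  have := hq i
  linarith
end

section
/- Let (v_1,…,v_n) be monotone valuations, let S = (S_1,…,S_n) be a welfare-optimal allocation, and let E be a significant endowment environment. With bundling B = {S_1,…,S_n} and bundle prices p_i = v_i(S_i), the pair (S, p) is an E-endowment competitive bundling equilibrium: for every consumer i and every index set T ⊆ [n], v_i^{S_i}(∪_{j∈T} S_j) - Σ_{j∈T} p_j ≤ v_i^{S_i}(S_i) - p_i. -/
/-- An optimal allocation, bundled with prices `p_i = v_i(S_i)`, forms an
endowment competitive bundling equilibrium for every significant endowment
environment. -/
theorem stmt18 {α ι : Type*} [DecidableEq α] [DecidableEq ι] [Fintype ι]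
    (M : Finset α) (v : ι → Finset α → ℝ) (S : ι → Finset α)
    (hS : ∀ i, S i ⊆ M)
    (hclear : Finset.univ.biUnion S = M)
    (hdisj : ∀ i j, i ≠ j → Disjoint (S i) (S j))
    (hmono : ∀ i, ∀ A B : Finset α, A ⊆ B → B ⊆ M → v i A ≤ v i B)
    (hv0 : ∀ i, v i ∅ = 0)
    (hnn : ∀ i X, 0 ≤ v i X)
    (hopt : ∀ S' : ι → Finset α, (∀ i, S' i ⊆ M) →
      (∀ i j, i ≠ j → Disjoint (S' i) (S' j)) →
      ∑ i, v i (S' i) ≤ ∑ i, v i (S i))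
    (g : ι → Finset α → Finset α → ℝ)
    (hg0 : ∀ i X, g i X ∅ = 0)
    (hgmono : ∀ i X, ∀ Z ⊆ X, g i X Z ≤ g i X X)
    (hsig : ∀ i X, v i X ≤ g i X X) :
    ∀ (i : ι) (T : Finset ι),
      v i (T.biUnion S) + g i (S i) (S i ∩ T.biUnion S) - ∑ j ∈ T, v j (S j) ≤
        v i (S i) + g i (S i) (S i) - v i (S i) := by
  intro i T
  classical
  set U : Finset α := T.biUnion S with hU
  have hUM : U ⊆ M := Finset.biUnion_subset.mpr fun j _ => hS j
  set S' : ι → Finset α := fun j => if j = i then S i ∪ U else if j ∈ T then ∅ else S j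
    with hS'def
  have hsub : ∀ j, S' j ⊆ M := by
    intro j
    simp only [hS'def]
    split_ifs
    · exact Finset.union_subset (hS i) hUM
    · simp
    · exact hS j
  have hdisjU : ∀ a, a ≠ i → a ∉ T → Disjoint (S i ∪ U) (S a) := by
    intro a ha haT
    refine Finset.disjoint_union_left.mpr ⟨hdisj i a (Ne.symm ha), ?_⟩
    refine Finset.disjoint_biUnion_left _ _ _ |>.mpr ?_
    intro j hj
    exact hdisj j a (fun h => haT (h ▸ hj))
  have hdisj' : ∀ j k, j ≠ k → Disjoint (S' j) (S' k) := by
    intro j k hjk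
    simp only [hS'def]
    by_cases hj : j = i
    · subst hj
      rw [if_pos rfl, if_neg (Ne.symm hjk)]
      by_cases hkT : k ∈ T
      · simp [hkT]
      · rw [if_neg hkT]; exact hdisjU k (Ne.symm hjk) hkT
    · rw [if_neg hj]
      by_cases hk : k = i
      · subst hk
        rw [if_pos rfl]
        by_cases hjT : j ∈ T
        · simp [hjT]
        · rw [if_neg hjT]; exact (hdisjU j hj hjT).symm
      · rw [if_neg hk]
        by_cases hjT : j ∈ T
        · simp [hjT]
        · by_cases hkT : k ∈ T
          · simp [hjT, hkT]
          · rw [if_neg hjT, if_neg hkT]; exact hdisj j k hjk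
  have hval : ∀ j, v j (S' j) = if j = i then v i (S i ∪ U) else if j ∈ T then 0 else v j (S j) := by
    intro j
    simp only [hS'def]
    split_ifs with h1 h2
    · rw [h1]
    · exact hv0 j
    · rfl
  have hsum1 : ∑ j, v j (S' j)
      = v i (S i ∪ U) + ∑ j ∈ Finset.univ.erase i, (if j ∈ T then 0 else v j (S j)) := by
    rw [← Finset.add_sum_erase _ _ (Finset.mem_univ i)]
    congr 1
    · rw [hval i]; simp
    · exact Finset.sum_congr rfl fun j hj => by
        rw [hval j, if_neg (Finset.ne_of_mem_erase hj)]
  have hsum2 : ∑ j, v j (S j) = v i (S i) + ∑ j ∈ Finset.univ.erase i, v j (S j) :=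
    (Finset.add_sum_erase _ _ (Finset.mem_univ i)).symm
  have hfil : (Finset.univ.erase i).filter (· ∈ T) = T.erase i := by
    ext j; simp [and_comm]
  have hsplit : ∑ j ∈ Finset.univ.erase i, v j (S j)
      = ∑ j ∈ T.erase i, v j (S j)
        + ∑ j ∈ Finset.univ.erase i, (if j ∈ T then 0 else v j (S j)) := by
    rw [← hfil]
    rw [← Finset.sum_filter_add_sum_filter_not (Finset.univ.erase i) (· ∈ T) (fun j => v j (S j))]
    congr 1
    rw [Finset.sum_filter]
    exact Finset.sum_congr rfl fun j _ => by split_ifs with h <;> simp [h]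
  have key : v i (S i ∪ U) ≤ v i (S i) + ∑ j ∈ T.erase i, v j (S j) := by
    have := hopt S' hsub hdisj'
    rw [hsum1, hsum2, hsplit] at this
    linarith
  have hmonU : v i U ≤ v i (S i ∪ U) :=
    hmono i U (S i ∪ U) Finset.subset_union_right (Finset.union_subset (hS i) hUM)
  by_cases hiT : i ∈ T
  · have hT : ∑ j ∈ T, v j (S j) = v i (S i) + ∑ j ∈ T.erase i, v j (S j) :=
      (Finset.add_sum_erase _ _ hiT).symm
    have hg : g i (S i) (S i ∩ U) ≤ g i (S i) (S i) :=
      hgmono i (S i) (S i ∩ U) Finset.inter_subset_left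
    linarith
  · have hdis : Disjoint (S i) U := by
      refine Finset.disjoint_biUnion_right _ _ _ |>.mpr ?_
      intro j hj
      exact hdisj i j (fun h => hiT (h ▸ hj))
    have hinter : S i ∩ U = ∅ := Finset.disjoint_iff_inter_eq_empty.mp hdis
    have herase : T.erase i = T := Finset.erase_eq_of_notMem hiT
    have hsigi := hsig i (S i)
    rw [herase] at key
    rw [hinter, hg0 i (S i)]
    linarith [key, hmonU, hsigi]
end

section
/- Let (v_1,…,v_n) be monotone submodular valuations and S = (S_1,…,S_n) an allocation of all of M satisfying v_i(S_j | S_i) ≤ v_j(S_j) for all i, j ∈ [n]. Then for any significant endowment environment E, the bundling {S_1,…,S_n} with bundle prices p_i = v_i(S_i) together with S forms an E-endowment competitive bundling equilibrium. -/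
/-- For monotone submodular valuations, an allocation of all items satisfying
`v_i(S_j | S_i) ≤ v_j(S_j)` for all `i, j`, bundled with prices
`p_i = v_i(S_i)`, forms an endowment competitive bundling equilibrium for
every significant endowment environment. -/
theorem stmt19 {α ι : Type*} [DecidableEq α] [DecidableEq ι] [Fintype ι]
    (M : Finset α) (v : ι → Finset α → ℝ) (S : ι → Finset α)
    (hS : ∀ i, S i ⊆ M)
    (hclear : Finset.univ.biUnion S = M)
    (hdisj : ∀ i j, i ≠ j → Disjoint (S i) (S j))
    (hmono : ∀ i, ∀ A B : Finset α, A ⊆ B → B ⊆ M → v i A ≤ v i B)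
    (hv0 : ∀ i, v i ∅ = 0)
    (hnn : ∀ i X, 0 ≤ v i X)
    (hsub : ∀ i, ∀ A B : Finset α, A ⊆ M → B ⊆ M →
      v i A + v i B ≥ v i (A ∪ B) + v i (A ∩ B))
    (hcond : ∀ i j, v i (S j ∪ S i) - v i (S i) ≤ v j (S j))
    (g : ι → Finset α → Finset α → ℝ)
    (hg0 : ∀ i X, g i X ∅ = 0)
    (hgmono : ∀ i X, ∀ Z ⊆ X, g i X Z ≤ g i X X)
    (hsig : ∀ i X, v i X ≤ g i X X) :
    ∀ (i : ι) (T : Finset ι),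
      v i (T.biUnion S) + g i (S i) (S i ∩ T.biUnion S) - ∑ j ∈ T, v j (S j) ≤
        v i (S i) + g i (S i) (S i) - v i (S i) := by
  intro i T
  have hBM : ∀ T : Finset ι, T.biUnion S ⊆ M := by
    intro T x hx
    rcases Finset.mem_biUnion.mp hx with ⟨j, _, hj⟩
    exact hS j hj
  -- key lemma
  have key : ∀ T : Finset ι, v i (S i ∪ T.biUnion S) ≤ v i (S i) + ∑ j ∈ T, v j (S j) := by
    intro T
    induction T using Finset.induction_on with
    | empty => simp
    | @insert k T hk ih =>
      have hB : T.biUnion S ⊆ M := hBM T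
      have hsub' := hsub i (S i ∪ S k) (S i ∪ T.biUnion S)
        (Finset.union_subset (hS i) (hS k)) (Finset.union_subset (hS i) hB)
      have hint : v i (S i) ≤ v i ((S i ∪ S k) ∩ (S i ∪ T.biUnion S)) := by
        apply hmono i _ _ (Finset.subset_inter Finset.subset_union_left
          Finset.subset_union_left)
        exact fun x hx => (Finset.union_subset (hS i) (hS k)) (Finset.mem_inter.mp hx).1
      have hck : v i (S k ∪ S i) - v i (S i) ≤ v k (S k) := hcond i k
      have heq : (S i ∪ S k) ∪ (S i ∪ T.biUnion S) = S i ∪ (insert k T).biUnion S := by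
        rw [Finset.biUnion_insert]
        ext x; simp [or_assoc, or_comm, or_left_comm]
      have hski : v i (S i ∪ S k) = v i (S k ∪ S i) := by rw [Finset.union_comm]
      have : v i (S i ∪ (insert k T).biUnion S) ≤
          v i (S i ∪ S k) + v i (S i ∪ T.biUnion S) - v i (S i) := by
        have := hsub'
        rw [heq] at this
        linarith
      rw [Finset.sum_insert hk]
      linarith
  by_cases hiT : i ∈ T
  · have hSiB : S i ⊆ T.biUnion S := Finset.subset_biUnion_of_mem S hiT
    have hginter : S i ∩ T.biUnion S = S i := Finset.inter_eq_left.mpr hSiB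
    have hBeq : S i ∪ (T.erase i).biUnion S = T.biUnion S := by
      ext x
      simp only [Finset.mem_union, Finset.mem_biUnion, Finset.mem_erase]
      constructor
      · rintro (hx | ⟨j, ⟨_, hj⟩, hxj⟩)
        · exact ⟨i, hiT, hx⟩
        · exact ⟨j, hj, hxj⟩
      · rintro ⟨j, hj, hxj⟩
        by_cases hji : j = i
        · subst hji; exact Or.inl hxj
        · exact Or.inr ⟨j, ⟨hji, hj⟩, hxj⟩
    have hk := key (T.erase i)
    rw [hBeq] at hk
    have hsum : ∑ j ∈ T, v j (S j) = v i (S i) + ∑ j ∈ T.erase i, v j (S j) :=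
      (Finset.add_sum_erase T (fun j => v j (S j)) hiT).symm
    rw [hginter, hsum]
    linarith
  · have hginter : S i ∩ T.biUnion S = ∅ := by
      apply Finset.eq_empty_of_forall_notMem
      intro x hx
      rcases Finset.mem_inter.mp hx with ⟨hx1, hx2⟩
      rcases Finset.mem_biUnion.mp hx2 with ⟨j, hj, hxj⟩
      exact Finset.notMem_empty x ((hdisj i j (fun h => hiT (h ▸ hj))).le_bot (Finset.mem_inter.mpr ⟨hx1, hxj⟩))
    have hm : v i (T.biUnion S) ≤ v i (S i ∪ T.biUnion S) :=
      hmono i _ _ Finset.subset_union_right (Finset.union_subset (hS i) (hBM T))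
    have := key T
    have hs := hsig i (S i)
    rw [hginter, hg0]
    linarith
end
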